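/- Let $G$ be an infinite group and $R = \mathbb{C}[G]$ its group algebra. Then every nonzero right ideal $J \subset R$ is infinite dimensional as a complex vector space. -/

import Mathlib

/-- Every nonzero right ideal of the group algebra `ℂ[G]` of an infinite group `G` is
infinite dimensional over `ℂ`. -/
theorem right_ideal_infinite_dimensional (G : Type*) [Group G] [Infinite G]
    (J : Submodule ℂ (MonoidAlgebra ℂ G))
    (hJ : ∀ a ∈ J, ∀ r : MonoidAlgebra ℂ G, a * r ∈ J) (hJne : J ≠ ⊥) :
    ¬ FiniteDimensional ℂ J := by
  intro hfd
  classical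
  obtain ⟨a, haJ, ha0⟩ := Submodule.exists_mem_ne_zero_of_ne_bot hJne
  obtain ⟨s, hs⟩ := Finsupp.support_nonempty_iff.mpr (MonoidAlgebra.coeff_eq_zero.not.mpr ha0)
  -- finite spanning set of J
  let B := Module.finBasis ℂ J
  set U : Finset G := Finset.biUnion Finset.univ (fun i => ((B i : MonoidAlgebra ℂ G)).coeff.support)
    with hU
  have hsupp : ∀ x ∈ J, (x : MonoidAlgebra ℂ G).coeff.support ⊆ U := by
    intro x hx
    have hx' : (⟨x, hx⟩ : J) = ∑ i, (B.repr ⟨x, hx⟩ i) • B i := (B.sum_repr ⟨x, hx⟩).symm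
    have hx'' : x = ∑ i, (B.repr ⟨x, hx⟩ i) • (B i : MonoidAlgebra ℂ G) := by
      have := congrArg (Subtype.val) hx'
      simpa only [Submodule.coe_sum, Submodule.coe_smul] using this
    rw [hx'', MonoidAlgebra.coeff_sum]
    refine (Finsupp.support_finset_sum).trans ?_
    intro y hy
    rw [Finset.mem_biUnion] at hy ⊢
    obtain ⟨i, _, hi⟩ := hy
    exact ⟨i, Finset.mem_univ i, Finsupp.mem_support_iff.mpr (by simp [MonoidAlgebra.coeff_smul] at hi; exact hi.2)⟩
  -- the map g ↦ s * g lands in U and is injective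
  have hmem : ∀ g : G, s * g ∈ U := by
    intro g
    have h1 : a * MonoidAlgebra.single g (1 : ℂ) ∈ J := hJ a haJ _
    have h2 : (a * MonoidAlgebra.single g (1 : ℂ)).coeff (s * g) ≠ 0 := by
      rw [MonoidAlgebra.coeff_mul_single_apply]
      simpa using Finsupp.mem_support_iff.mp hs
    exact hsupp _ h1 (Finsupp.mem_support_iff.mpr h2)
  have hinj : Function.Injective (fun g : G => s * g) := fun g₁ g₂ h =>
    mul_left_cancel h
  have : (Set.range (fun g : G => s * g)).Infinite := Set.infinite_range_of_injective hinj
  refine this (Set.Finite.subset U.finite_toSet ?_)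
  rintro y ⟨g, rfl⟩
  exact hmem g
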